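/- If H is a subgroup of a finite group G, then k(H) ≤ |G : H| · k(G), where k denotes the number of conjugacy classes. -/

import Mathlib

/-- If `H` is a subgroup of a finite group `G`, then `k(H) ≤ |G : H| · k(G)`. -/
theorem stmt_3 (G : Type*) [Group G] [Finite G] (H : Subgroup G) :
    Nat.card (ConjClasses H) ≤ H.index * Nat.card (ConjClasses G) := by
  have hinj : Nat.card { p : H × H // Commute p.1 p.2 }
      ≤ Nat.card { p : G × G // Commute p.1 p.2 } := by
    refine Nat.card_le_card_of_injective (fun p ↦ ⟨⟨p.1.1, p.1.2⟩, Subtype.ext_iff.mp p.2⟩) ?_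
    exact fun p q h ↦ by simpa only [Subtype.ext_iff, Prod.ext_iff] using h
  rw [card_comm_eq_card_conjClasses_mul_card, card_comm_eq_card_conjClasses_mul_card,
    ← H.card_mul_index] at hinj
  have hpos : 0 < Nat.card H := Finite.card_pos
  refine Nat.le_of_mul_le_mul_right ?_ hpos
  calc Nat.card (ConjClasses H) * Nat.card H
      ≤ Nat.card (ConjClasses G) * (Nat.card H * H.index) := hinj
    _ = H.index * Nat.card (ConjClasses G) * Nat.card H := by ring
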